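/- With x_{0,z} = ν_0^{⊗z} and x_{z,z} = ν_1^{⊗z} in X^{⊗z}, the identity [z-k]!·F^k(x_{0,z}) = [k]!·E^{z-k}(x_{z,z}) holds for all 0 ≤ k ≤ z, where E and F act via the iterated coproducts. -/

import Mathlib

/-- The quantum integer `[k] = (q^k - q^{-k})/(q - q^{-1})`. -/
noncomputable def qint (q : ℂ) (k : ℤ) : ℂ := (q ^ k - q ^ (-k)) / (q - q⁻¹)

/-- The quantum factorial `[n]! = [1][2]⋯[n]`. -/
noncomputable def qfact (q : ℂ) (n : ℕ) : ℂ := ∏ j ∈ Finset.range n, qint q (j + 1)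

/-- The `z`-fold tensor power `X^{⊗z}` of `X = ℂ²`, realized as functions on bit strings:
`v s` is the coefficient of the basis tensor `ν_{s 0} ⊗ ⋯ ⊗ ν_{s (z-1)}`. -/
abbrev V (z : ℕ) := (Fin z → Fin 2) → ℂ

/-- The basis vector of `V z` corresponding to the bit string `t`. -/
def bvec (z : ℕ) (t : Fin z → Fin 2) : V z := fun s => if s = t then 1 else 0

/-- The action of `E` on `X^{⊗z}` via the iterated coproduct
`Δ^{z-1}(E) = Σᵢ 1^{⊗i} ⊗ E ⊗ K^{⊗(z-1-i)}`, where `E ν₁ = ν₀`, `E ν₀ = 0`,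
`K ν_a = q^{1-2a} ν_a`. -/
noncomputable def Eop (q : ℂ) (z : ℕ) (v : V z) : V z := fun s =>
  ∑ i : Fin z, if s i = 0 then
    (∏ j ∈ Finset.univ.filter (fun j => i < j), q ^ ((1 : ℤ) - 2 * ((s j : ℕ) : ℤ))) *
      v (Function.update s i 1)
  else 0

/-- The action of `F` on `X^{⊗z}` via the iterated coproduct
`Δ^{z-1}(F) = Σᵢ (K⁻¹)^{⊗i} ⊗ F ⊗ 1^{⊗(z-1-i)}`, where `F ν₀ = ν₁`, `F ν₁ = 0`,
`K⁻¹ ν_a = q^{2a-1} ν_a`. -/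
noncomputable def Fop (q : ℂ) (z : ℕ) (v : V z) : V z := fun s =>
  ∑ i : Fin z, if s i = 1 then
    (∏ j ∈ Finset.univ.filter (fun j => j < i), q ^ (-((1 : ℤ) - 2 * ((s j : ℕ) : ℤ)))) *
      v (Function.update s i 0)
  else 0

/-- The action of `K` on `X^{⊗z}` via `Δ^{z-1}(K) = K^{⊗z}`. -/
noncomputable def Kop (q : ℂ) (z : ℕ) (v : V z) : V z := fun s =>
  (∏ j, q ^ ((1 : ℤ) - 2 * ((s j : ℕ) : ℤ))) * v s

lemma prod_zpow_eq {α : Type*} [DecidableEq α] {q : ℂ} (hq : q ≠ 0) (t : Finset α) (f : α → ℤ) :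
    ∏ j ∈ t, q ^ f j = q ^ (∑ j ∈ t, f j) := by
  induction t using Finset.induction with
  | empty => simp
  | insert _ _ h ih => rw [Finset.prod_insert h, Finset.sum_insert h, ih, ← zpow_add₀ hq]

lemma choose_two_succ (b : ℕ) : (b+1).choose 2 = b.choose 2 + b := by
  rw [Nat.choose_succ_succ]
  simp [Nat.choose_one_right, Nat.add_comm]

lemma sum_fin_val : True := trivial

-- per-i sum of bit values equals count of ones
lemma sum_bits {z : ℕ} (s : Fin z → Fin 2) (T : Finset (Fin z)) :
    ∑ j ∈ T, ((s j : ℕ) : ℤ) = ((T.filter (fun j => s j = 1)).card : ℤ) := by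
  rw [Finset.card_filter]
  push_cast
  apply Finset.sum_congr rfl
  intro j _
  rcases Fin.exists_fin_two.mp ⟨s j, rfl⟩ with h|h <;> simp_all

lemma fin2_ne_one {a : Fin 2} (h : a ≠ 1) : a = 0 := by omega

lemma ones_update {z : ℕ} (s : Fin z → Fin 2) (i : Fin z) (hi : s i = 1) :
    Finset.univ.filter (fun j => Function.update s i 0 j = 1)
      = (Finset.univ.filter (fun j => s j = 1)).erase i := by
  ext j
  rcases eq_or_ne j i with rfl|h
  · simp [Function.update_self]
  · simp [Function.update_of_ne h, h]

lemma zeros_update {z : ℕ} (s : Fin z → Fin 2) (i : Fin z) (hi : s i = 0) :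
    Finset.univ.filter (fun j => Function.update s i 1 j = 0)
      = (Finset.univ.filter (fun j => s j = 0)).erase i := by
  ext j
  rcases eq_or_ne j i with rfl|h
  · simp [Function.update_self]
  · simp [Function.update_of_ne h, h]

lemma image_rank_lt {z : ℕ} (S : Finset (Fin z)) :
    S.image (fun i => (S.filter (fun j => j < i)).card) = Finset.range S.card := by
  have hmono : ∀ a ∈ S, ∀ b ∈ S, a < b →
      (S.filter (fun j => j < a)).card < (S.filter (fun j => j < b)).card := by
    intro a ha b hb hab
    apply Finset.card_lt_card
    constructor
    · intro j hj
      obtain ⟨hjS, hja⟩ := Finset.mem_filter.1 hj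
      exact Finset.mem_filter.2 ⟨hjS, lt_trans hja hab⟩
    · intro hsub
      have h1 : a ∈ S.filter (fun j => j < b) := Finset.mem_filter.2 ⟨ha, hab⟩
      have h2 := hsub h1
      exact absurd (Finset.mem_filter.1 h2).2 (lt_irrefl a)
  have hinj : Set.InjOn (fun i => (S.filter (fun j => j < i)).card) S := by
    intro a ha b hb hab
    by_contra hne
    rcases Ne.lt_or_gt hne with h|h
    · exact absurd hab (Nat.ne_of_lt (hmono a ha b hb h))
    · exact absurd hab.symm (Nat.ne_of_lt (hmono b hb a ha h))
  apply Finset.eq_of_subset_of_card_le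
  · intro x hx
    obtain ⟨i, hi, rfl⟩ := Finset.mem_image.1 hx
    refine Finset.mem_range.2 ?_
    have hsub : S.filter (fun j => j < i) ⊆ S.erase i := by
      intro j hj
      obtain ⟨hjS, hji⟩ := Finset.mem_filter.1 hj
      exact Finset.mem_erase.2 ⟨ne_of_lt hji, hjS⟩
    calc (S.filter (fun j => j < i)).card ≤ (S.erase i).card := Finset.card_le_card hsub
      _ < S.card := Finset.card_erase_lt_of_mem hi
  · rw [Finset.card_image_of_injOn hinj, Finset.card_range]

lemma image_rank_gt {z : ℕ} (S : Finset (Fin z)) :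
    S.image (fun i => (S.filter (fun j => i < j)).card) = Finset.range S.card := by
  have hmono : ∀ a ∈ S, ∀ b ∈ S, a < b →
      (S.filter (fun j => b < j)).card < (S.filter (fun j => a < j)).card := by
    intro a ha b hb hab
    apply Finset.card_lt_card
    constructor
    · intro j hj
      obtain ⟨hjS, hja⟩ := Finset.mem_filter.1 hj
      exact Finset.mem_filter.2 ⟨hjS, lt_trans hab hja⟩
    · intro hsub
      have h1 : b ∈ S.filter (fun j => a < j) := Finset.mem_filter.2 ⟨hb, hab⟩
      have h2 := hsub h1
      exact absurd (Finset.mem_filter.1 h2).2 (lt_irrefl b)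
  have hinj : Set.InjOn (fun i => (S.filter (fun j => i < j)).card) S := by
    intro a ha b hb hab
    by_contra hne
    rcases Ne.lt_or_gt hne with h|h
    · exact absurd hab.symm (Nat.ne_of_lt (hmono a ha b hb h))
    · exact absurd hab (Nat.ne_of_lt (hmono b hb a ha h))
  apply Finset.eq_of_subset_of_card_le
  · intro x hx
    obtain ⟨i, hi, rfl⟩ := Finset.mem_image.1 hx
    refine Finset.mem_range.2 ?_
    have hsub : S.filter (fun j => i < j) ⊆ S.erase i := by
      intro j hj
      obtain ⟨hjS, hji⟩ := Finset.mem_filter.1 hj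
      exact Finset.mem_erase.2 ⟨(ne_of_lt hji).symm, hjS⟩
    calc (S.filter (fun j => i < j)).card ≤ (S.erase i).card := Finset.card_le_card hsub
      _ < S.card := Finset.card_erase_lt_of_mem hi
  · rw [Finset.card_image_of_injOn hinj, Finset.card_range]

lemma sum_q2 {q : ℂ} (hq : q ≠ 0) (hd : q - q⁻¹ ≠ 0) (n : ℕ) :
    ∑ m ∈ Finset.range n, q ^ (2 * (m:ℤ)) = q ^ ((n:ℤ) - 1) * qint q n := by
  induction n with
  | zero => simp [qint]
  | succ n ih =>
    rw [Finset.sum_range_succ, ih, qint, qint]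
    have ha : q ^ (n:ℤ) ≠ 0 := zpow_ne_zero _ hq
    have e1 : q ^ ((n:ℤ) - 1) = q ^ (n:ℤ) * q⁻¹ := by
      rw [zpow_sub₀ hq, zpow_one, div_eq_mul_inv]
    have e2 : q ^ (2 * (n:ℤ)) = q ^ (n:ℤ) * q ^ (n:ℤ) := by
      rw [show (2*(n:ℤ)) = (n:ℤ) + (n:ℤ) by ring, zpow_add₀ hq]
    have e3 : q ^ (((n:ℕ)+1:ℕ):ℤ) = q ^ (n:ℤ) * q := by
      push_cast; rw [zpow_add₀ hq, zpow_one]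
    have e4 : q ^ (-(((n:ℕ)+1:ℕ):ℤ)) = (q ^ (n:ℤ))⁻¹ * q⁻¹ := by
      push_cast
      rw [show (-((n:ℤ)+1)) = (-(n:ℤ)) + (-1) by ring, zpow_add₀ hq, zpow_neg, zpow_neg, zpow_one]
    have h2 : q ^ 2 - 1 ≠ 0 := by
      intro h
      apply hd
      have : q ^ 2 = 1 := by linear_combination h
      field_simp [hq]
      linear_combination this
    have hdd : q - q⁻¹ = (q ^ 2 - 1) / q := by field_simp
    rw [show (((n:ℕ)+1:ℕ):ℤ) - 1 = (n:ℤ) by push_cast; ring, e2, e3, e4, e1, zpow_neg, hdd]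
    field_simp
    ring

lemma sum_rank_lt {z : ℕ} {q : ℂ} (hq : q ≠ 0) (hd : q - q⁻¹ ≠ 0) (S : Finset (Fin z)) :
    ∑ i ∈ S, q ^ (2 * (((S.filter (fun j => j < i)).card : ℕ) : ℤ))
      = q ^ ((S.card : ℤ) - 1) * qint q S.card := by
  rw [← sum_q2 hq hd, ← image_rank_lt S]
  rw [Finset.sum_image]
  intro a ha b hb hab
  have hinj : Set.InjOn (fun i => (S.filter (fun j => j < i)).card) S := by
    exact Finset.injOn_of_card_image_eq (by rw [image_rank_lt S, Finset.card_range])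
  exact hinj ha hb hab

lemma sum_rank_gt {z : ℕ} {q : ℂ} (hq : q ≠ 0) (hd : q - q⁻¹ ≠ 0) (S : Finset (Fin z)) :
    ∑ i ∈ S, q ^ (2 * (((S.filter (fun j => i < j)).card : ℕ) : ℤ))
      = q ^ ((S.card : ℤ) - 1) * qint q S.card := by
  rw [← sum_q2 hq hd, ← image_rank_gt S]
  rw [Finset.sum_image]
  intro a ha b hb hab
  have hinj : Set.InjOn (fun i => (S.filter (fun j => i < j)).card) S := by
    exact Finset.injOn_of_card_image_eq (by rw [image_rank_gt S, Finset.card_range])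
  exact hinj ha hb hab

lemma card_univ_filter_lt {z : ℕ} (i : Fin z) :
    (Finset.univ.filter (fun j => j < i)).card = i.val := by
  have h : (Finset.univ.filter (fun j => j < i)) = Finset.Iio i := by ext j; simp
  rw [h, Fin.card_Iio]

lemma card_univ_filter_gt {z : ℕ} (i : Fin z) :
    (Finset.univ.filter (fun j => i < j)).card = z - 1 - i.val := by
  have h : (Finset.univ.filter (fun j => i < j)) = Finset.Ioi i := by ext j; simp
  rw [h, Fin.card_Ioi]

lemma Fpow_apply (q : ℂ) (hq : q ≠ 0) (hd : q - q⁻¹ ≠ 0) (z : ℕ) :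
    ∀ (k : ℕ) (s : Fin z → Fin 2),
    (Fop q z)^[k] (bvec z (fun _ => 0)) s =
      if (Finset.univ.filter (fun i => s i = 1)).card = k then
        qfact q k * q ^ ((k.choose 2 : ℤ) - ∑ i ∈ Finset.univ.filter (fun i => s i = 1), ((i:ℕ):ℤ))
      else 0 := by
  intro k
  induction k with
  | zero =>
    intro s
    simp only [Function.iterate_zero_apply, bvec]
    by_cases h : s = fun _ => 0
    · have he : Finset.univ.filter (fun i => s i = 1) = ∅ := by
        ext i; simp [h]
      rw [if_pos h, he]
      simp [qfact]
    · rw [if_neg h]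
      have hne : (Finset.univ.filter (fun i => s i = 1)).card ≠ 0 := by
        intro hcc
        apply h
        funext i
        have h0 := Finset.card_eq_zero.mp hcc
        have hi : i ∉ Finset.univ.filter (fun i => s i = 1) := by rw [h0]; simp
        have : ¬ s i = 1 := by simpa using hi
        exact fin2_ne_one this
      rw [if_neg hne]
  | succ k ih =>
    intro s
    rw [Function.iterate_succ_apply']
    show (∑ i : Fin z, if s i = 1 then
      (∏ j ∈ Finset.univ.filter (fun j => j < i), q ^ (-((1 : ℤ) - 2 * ((s j : ℕ) : ℤ)))) *
        (Fop q z)^[k] (bvec z (fun _ => 0)) (Function.update s i 0)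
      else 0) = _
    by_cases hc : (Finset.univ.filter (fun i => s i = 1)).card = k + 1
    · rw [if_pos hc]
      rw [← Finset.sum_filter]
      set S := Finset.univ.filter (fun i => s i = 1) with hS
      have hterm : ∀ i ∈ S,
          (∏ j ∈ Finset.univ.filter (fun j => j < i), q ^ (-((1 : ℤ) - 2 * ((s j : ℕ) : ℤ)))) *
            (Fop q z)^[k] (bvec z (fun _ => 0)) (Function.update s i 0)
          = (qfact q k * q ^ ((k.choose 2 : ℤ) - ∑ j ∈ S, ((j:ℕ):ℤ))) *
              q ^ (2 * (((S.filter (fun j => j < i)).card : ℕ) : ℤ)) := by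
        intro i hiS
        have hsi : s i = 1 := (Finset.mem_filter.1 hiS).2
        rw [ih, ones_update s i hsi, ← hS]
        rw [if_pos (by rw [Finset.card_erase_of_mem hiS, hc]; rfl)]
        rw [prod_zpow_eq hq]
        have he1 : ∑ j ∈ Finset.univ.filter (fun j => j < i), (-((1 : ℤ) - 2 * ((s j : ℕ) : ℤ)))
            = 2 * (((S.filter (fun j => j < i)).card : ℕ) : ℤ) - ((i : ℕ) : ℤ) := by
          have hswap : (Finset.univ.filter (fun j => j < i)).filter (fun j => s j = 1)
              = S.filter (fun j => j < i) := by
            rw [hS, Finset.filter_comm]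
          calc ∑ j ∈ Finset.univ.filter (fun j => j < i), (-((1 : ℤ) - 2 * ((s j : ℕ) : ℤ)))
              = ∑ j ∈ Finset.univ.filter (fun j => j < i), (2 * ((s j : ℕ) : ℤ) - 1) := by
                apply Finset.sum_congr rfl; intros; ring
            _ = (∑ j ∈ Finset.univ.filter (fun j => j < i), 2 * ((s j : ℕ) : ℤ))
                - ∑ _j ∈ Finset.univ.filter (fun j => j < i), (1:ℤ) := Finset.sum_sub_distrib _ _
            _ = 2 * (((S.filter (fun j => j < i)).card : ℕ) : ℤ) - ((i : ℕ) : ℤ) := by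
                rw [← Finset.mul_sum, sum_bits, hswap, Finset.sum_const, nsmul_eq_mul, mul_one,
                  card_univ_filter_lt]
        rw [he1, Finset.sum_erase_eq_sub hiS]
        have hcomb : q ^ (2 * (((S.filter (fun j => j < i)).card : ℕ) : ℤ) - ((i : ℕ) : ℤ))
              * q ^ ((k.choose 2 : ℤ) - ((∑ j ∈ S, ((j:ℕ):ℤ)) - ((i:ℕ):ℤ)))
            = q ^ ((k.choose 2 : ℤ) - ∑ j ∈ S, ((j:ℕ):ℤ))
              * q ^ (2 * (((S.filter (fun j => j < i)).card : ℕ) : ℤ)) := by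
          rw [← zpow_add₀ hq, ← zpow_add₀ hq]
          congr 1
          ring
        linear_combination (qfact q k) * hcomb
      rw [Finset.sum_congr rfl hterm, ← Finset.mul_sum, sum_rank_lt hq hd S, hc]
      have hf : qfact q (k+1) = qfact q k * qint q ((k:ℤ)+1) := by
        rw [qfact, qfact, Finset.prod_range_succ]
      rw [hf, show ((((k+1):ℕ):ℤ) - 1) = (k:ℤ) by push_cast; ring,
        show ((k+1).choose 2 : ℤ) - ∑ j ∈ S, ((j:ℕ):ℤ)
            = ((k.choose 2 : ℤ) - ∑ j ∈ S, ((j:ℕ):ℤ)) + (k:ℤ) by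
          rw [choose_two_succ]; push_cast; ring,
        zpow_add₀ hq]
      push_cast
      ring
    · rw [if_neg hc]
      apply Finset.sum_eq_zero
      intro i _
      by_cases hsi : s i = 1
      · rw [if_pos hsi, ih, ones_update s i hsi]
        have hiS : i ∈ Finset.univ.filter (fun i => s i = 1) := by simp [hsi]
        have h1 : 1 ≤ (Finset.univ.filter (fun i => s i = 1)).card := Finset.card_pos.2 ⟨i, hiS⟩
        rw [Finset.card_erase_of_mem hiS]
        rw [if_neg (by omega), mul_zero]
      · rw [if_neg hsi]

lemma fin2_ne_zero {a : Fin 2} (h : a ≠ 0) : a = 1 := by omega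

lemma Epow_apply (q : ℂ) (hq : q ≠ 0) (hd : q - q⁻¹ ≠ 0) (z : ℕ) :
    ∀ (m : ℕ), m ≤ z → ∀ (s : Fin z → Fin 2),
    (Eop q z)^[m] (bvec z (fun _ => 1)) s =
      if (Finset.univ.filter (fun i => s i = 0)).card = m then
        qfact q m * q ^ (((z-m).choose 2 : ℤ) - (z.choose 2 : ℤ)
          + ∑ i ∈ Finset.univ.filter (fun i => s i = 0), ((i:ℕ):ℤ))
      else 0 := by
  intro m
  induction m with
  | zero =>
    intro _ s
    simp only [Function.iterate_zero_apply, bvec]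
    by_cases h : s = fun _ => 1
    · have he : Finset.univ.filter (fun i => s i = 0) = ∅ := by ext i; simp [h]
      rw [if_pos h, he]
      simp [qfact]
    · rw [if_neg h]
      have hne : (Finset.univ.filter (fun i => s i = 0)).card ≠ 0 := by
        intro hcc
        apply h
        funext i
        have h0 := Finset.card_eq_zero.mp hcc
        have hi : i ∉ Finset.univ.filter (fun i => s i = 0) := by rw [h0]; simp
        have : ¬ s i = 0 := by simpa using hi
        exact fin2_ne_zero this
      rw [if_neg hne]
  | succ m ih =>
    intro hm1 s
    have hm : m ≤ z := Nat.le_of_succ_le hm1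
    rw [Function.iterate_succ_apply']
    show (∑ i : Fin z, if s i = 0 then
      (∏ j ∈ Finset.univ.filter (fun j => i < j), q ^ ((1 : ℤ) - 2 * ((s j : ℕ) : ℤ))) *
        (Eop q z)^[m] (bvec z (fun _ => 1)) (Function.update s i 1)
      else 0) = _
    by_cases hc : (Finset.univ.filter (fun i => s i = 0)).card = m + 1
    · rw [if_pos hc, ← Finset.sum_filter]
      set Z := Finset.univ.filter (fun i => s i = 0) with hZ
      have hterm : ∀ i ∈ Z,
          (∏ j ∈ Finset.univ.filter (fun j => i < j), q ^ ((1:ℤ) - 2*((s j:ℕ):ℤ))) *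
            (Eop q z)^[m] (bvec z (fun _ => 1)) (Function.update s i 1)
          = (qfact q m * q ^ (((z-m).choose 2:ℤ) - (z.choose 2:ℤ)
                + ∑ j ∈ Z, ((j:ℕ):ℤ) - ((z:ℤ) - 1)))
              * q ^ (2 * (((Z.filter (fun j => i < j)).card:ℕ):ℤ)) := by
        intro i hiZ
        have hsi : s i = 0 := (Finset.mem_filter.1 hiZ).2
        rw [ih hm, zeros_update s i hsi, ← hZ]
        rw [if_pos (by rw [Finset.card_erase_of_mem hiZ, hc]; rfl)]
        rw [prod_zpow_eq hq]
        have hT : ((Finset.univ.filter (fun j => i < j)).card : ℤ) = (z:ℤ) - 1 - ((i:ℕ):ℤ) := by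
          rw [card_univ_filter_gt]
          have := i.isLt
          omega
        have hneg' : Finset.univ.filter (fun j => ¬ s j = 1)
            = Finset.univ.filter (fun j => s j = 0) := by
          ext j
          simp only [Finset.mem_filter, Finset.mem_univ, true_and]
          constructor
          · exact fin2_ne_one
          · intro hh; rw [hh]; decide
        have hneg : (Finset.univ.filter (fun j => i < j)).filter (fun j => ¬ s j = 1)
            = Z.filter (fun j => i < j) := by
          rw [hZ, Finset.filter_comm, hneg']
        have hsplit := Finset.card_filter_add_card_filter_not
          (s := Finset.univ.filter (fun j => i < j)) (p := fun j => s j = 1)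
        rw [hneg] at hsplit
        have he1 : ∑ j ∈ Finset.univ.filter (fun j => i < j), ((1:ℤ) - 2*((s j:ℕ):ℤ))
            = 2 * (((Z.filter (fun j => i < j)).card:ℕ):ℤ) - ((z:ℤ) - 1 - ((i:ℕ):ℤ)) := by
          calc ∑ j ∈ Finset.univ.filter (fun j => i < j), ((1:ℤ) - 2*((s j:ℕ):ℤ))
              = (∑ _j ∈ Finset.univ.filter (fun j => i < j), (1:ℤ))
                - ∑ j ∈ Finset.univ.filter (fun j => i < j), 2 * ((s j:ℕ):ℤ) :=
                Finset.sum_sub_distrib _ _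
            _ = ((Finset.univ.filter (fun j => i < j)).card : ℤ)
                - 2 * (((Finset.univ.filter (fun j => i < j)).filter (fun j => s j = 1)).card : ℤ) := by
                rw [← Finset.mul_sum, sum_bits, Finset.sum_const, nsmul_eq_mul, mul_one]
            _ = 2 * (((Z.filter (fun j => i < j)).card:ℕ):ℤ) - ((z:ℤ) - 1 - ((i:ℕ):ℤ)) := by
                omega
        rw [he1, Finset.sum_erase_eq_sub hiZ]
        have hcomb : q ^ (2 * (((Z.filter (fun j => i < j)).card:ℕ):ℤ) - ((z:ℤ) - 1 - ((i:ℕ):ℤ)))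
              * q ^ (((z-m).choose 2:ℤ) - (z.choose 2:ℤ) + ((∑ j ∈ Z, ((j:ℕ):ℤ)) - ((i:ℕ):ℤ)))
            = q ^ (((z-m).choose 2:ℤ) - (z.choose 2:ℤ) + ∑ j ∈ Z, ((j:ℕ):ℤ) - ((z:ℤ) - 1))
              * q ^ (2 * (((Z.filter (fun j => i < j)).card:ℕ):ℤ)) := by
          rw [← zpow_add₀ hq, ← zpow_add₀ hq]
          congr 1
          ring
        linear_combination qfact q m * hcomb
      rw [Finset.sum_congr rfl hterm, ← Finset.mul_sum, sum_rank_gt hq hd Z, hc]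
      have hf : qfact q (m+1) = qfact q m * qint q ((m:ℤ)+1) := by
        rw [qfact, qfact, Finset.prod_range_succ]
      have hch : ((z-(m+1)).choose 2 : ℤ) = ((z-m).choose 2:ℤ) - ((z:ℤ) - (m:ℤ) - 1) := by
        obtain ⟨b, hb⟩ : ∃ b, z - m = b + 1 := ⟨z - m - 1, by omega⟩
        have hb2 : z - (m+1) = b := by omega
        rw [hb, hb2, choose_two_succ]
        push_cast
        have hbz : (b:ℤ) = (z:ℤ) - m - 1 := by omega
        rw [hbz]; ring
      rw [hf, show ((((m+1):ℕ):ℤ) - 1) = (m:ℤ) by push_cast; ring,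
        show ((z-(m+1)).choose 2 : ℤ) - (z.choose 2:ℤ) + ∑ j ∈ Z, ((j:ℕ):ℤ)
            = (((z-m).choose 2:ℤ) - (z.choose 2:ℤ) + ∑ j ∈ Z, ((j:ℕ):ℤ) - ((z:ℤ)-1)) + (m:ℤ) by
          rw [hch]; ring,
        zpow_add₀ hq]
      push_cast
      ring
    · rw [if_neg hc]
      apply Finset.sum_eq_zero
      intro i _
      by_cases hsi : s i = 0
      · rw [if_pos hsi, ih hm, zeros_update s i hsi]
        have hiZ : i ∈ Finset.univ.filter (fun i => s i = 0) := by simp [hsi]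
        have h1 : 1 ≤ (Finset.univ.filter (fun i => s i = 0)).card := Finset.card_pos.2 ⟨i, hiZ⟩
        rw [Finset.card_erase_of_mem hiZ, if_neg (by omega), mul_zero]
      · rw [if_neg hsi]

lemma sum_range_id_choose (n : ℕ) : ∑ i ∈ Finset.range n, i = n.choose 2 := by
  induction n with
  | zero => simp
  | succ n ih => rw [Finset.sum_range_succ, ih, choose_two_succ]

lemma filter_not_one {z : ℕ} (s : Fin z → Fin 2) :
    Finset.univ.filter (fun j => ¬ s j = 1) = Finset.univ.filter (fun j => s j = 0) := by
  ext j
  simp only [Finset.mem_filter, Finset.mem_univ, true_and]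
  constructor
  · exact fin2_ne_one
  · intro hh; rw [hh]; decide


/-- `[z-k]!·F^k(ν₀^{⊗z}) = [k]!·E^{z-k}(ν₁^{⊗z})` for `0 ≤ k ≤ z`. -/
theorem F_pow_eq_E_pow (q : ℂ) (hq0 : q ≠ 0) (hq1 : q ^ 2 ≠ 1)
    (z k : ℕ) (hk : k ≤ z)
    (hqi : ∀ j : ℕ, 1 ≤ j → j ≤ z → qint q j ≠ 0) :
    qfact q (z - k) • (Fop q z)^[k] (bvec z (fun _ => 0)) =
      qfact q k • (Eop q z)^[z - k] (bvec z (fun _ => 1)) := by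
  have hd : q - q⁻¹ ≠ 0 := by
    intro h
    apply hq1
    have h' : q = q⁻¹ := sub_eq_zero.mp h
    rw [sq]
    nth_rewrite 2 [h']
    exact mul_inv_cancel₀ hq0
  funext s
  simp only [Pi.smul_apply, smul_eq_mul]
  rw [Fpow_apply q hq0 hd z k s, Epow_apply q hq0 hd z (z-k) (Nat.sub_le z k) s]
  have hcard : (Finset.univ.filter (fun i => s i = 1)).card
      + (Finset.univ.filter (fun i => s i = 0)).card = z := by
    have h1 := Finset.card_filter_add_card_filter_not
      (s := Finset.univ) (p := fun i : Fin z => s i = 1)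
    rw [filter_not_one] at h1
    simpa using h1
  by_cases hS : (Finset.univ.filter (fun i => s i = 1)).card = k
  · have hZ : (Finset.univ.filter (fun i => s i = 0)).card = z - k := by omega
    rw [if_pos hS, if_pos hZ]
    have hsum : (∑ i ∈ Finset.univ.filter (fun i => s i = 1), ((i:ℕ):ℤ))
        + (∑ i ∈ Finset.univ.filter (fun i => s i = 0), ((i:ℕ):ℤ)) = (z.choose 2 : ℤ) := by
      have h1 := Finset.sum_filter_add_sum_filter_not Finset.univ
        (fun i : Fin z => s i = 1) (fun i => ((i:ℕ):ℤ))
      rw [filter_not_one] at h1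
      rw [h1]
      have h2 : ∑ i : Fin z, ((i:ℕ):ℤ) = ∑ i ∈ Finset.range z, ((i:ℕ):ℤ) :=
        Fin.sum_univ_eq_sum_range (fun i => ((i:ℕ):ℤ)) z
      rw [h2, ← Nat.cast_sum, sum_range_id_choose]
    have hz2 : z - (z - k) = k := by omega
    rw [hz2]
    have hexp : (k.choose 2:ℤ) - ∑ i ∈ Finset.univ.filter (fun i => s i = 1), ((i:ℕ):ℤ)
        = (k.choose 2:ℤ) - (z.choose 2:ℤ)
          + ∑ i ∈ Finset.univ.filter (fun i => s i = 0), ((i:ℕ):ℤ) := by omega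
    rw [hexp]
    ring
  · have hZ : (Finset.univ.filter (fun i => s i = 0)).card ≠ z - k := by omega
    rw [if_neg hS, if_neg hZ, mul_zero, mul_zero]
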